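/- arXiv:1605.09228 — 3 statements merged into one kernel-verified Lean document; each statement's English description precedes it below -/
import Mathlib

section
/- Let p ≥ 5 be a prime number, let ζ be a primitive (p−1)-th root of unity in the (p−1)-th cyclotomic field ℚ(ζ_{p−1}), and let α be an element of the ring of integers ℤ[ζ_{p−1}] with field norm N_{ℚ(ζ_{p−1})/ℚ}(α) = ±p. If σ is a ℚ-algebra automorphism of ℚ(ζ_{p−1}) with σ(ζ) = ζ⁻¹ (complex conjugation), then the principal ideals (α) and (σ(α)) of ℤ[ζ_{p−1}] are distinct. -/
open NumberField

set_option maxHeartbeats 1000000 in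
set_option synthInstance.maxHeartbeats 400000 in
lemma span_ne_span_conj_aux {K : Type*} [Field K] [NumberField K]
    (p : ℕ) (hp : p.Prime) (hp5 : 5 ≤ p)
    (ζ : K) (hζ : IsPrimitiveRoot ζ (p - 1)) (α : 𝓞 K)
    (hα : Algebra.norm ℚ (α : K) = (p : ℚ) ∨ Algebra.norm ℚ (α : K) = -(p : ℚ))
    (σ : K ≃ₐ[ℚ] K) (hσ : σ ζ = ζ⁻¹)
    (β : 𝓞 K) (hβ : (β : K) = σ (α : K)) :
    Ideal.span {α} ≠ Ideal.span {β} := by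
  haveI : Fact p.Prime := ⟨hp⟩
  intro h
  -- norm of α over ℤ
  have hco : ((Algebra.norm ℤ α : ℤ) : ℚ) = Algebra.norm ℚ (α : K) := Algebra.coe_norm_int α
  have hNα : (Algebra.norm ℤ α).natAbs = p := by
    rcases hα with h1 | h1
    · have h2 : Algebra.norm ℤ α = (p : ℤ) := by
        have := hco.trans h1
        exact_mod_cast this
      simp [h2]
    · have h2 : Algebra.norm ℤ α = -(p : ℤ) := by
        have := hco.trans h1
        exact_mod_cast this
      simp [h2]
  have habs : (Ideal.span {α}).absNorm = p := by
    rw [Ideal.absNorm_span_singleton, hNα]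
  have hIprime : (Ideal.span {α} : Ideal (𝓞 K)).IsPrime :=
    Ideal.isPrime_of_irreducible_absNorm (by rw [habs]; exact hp.prime.irreducible)
  have hα0 : α ≠ 0 := by
    intro h0
    rw [h0] at hNα
    simp at hNα
    omega
  have hIbot : (Ideal.span {α} : Ideal (𝓞 K)) ≠ ⊥ := by
    rw [Ne, Ideal.span_singleton_eq_bot]
    exact hα0
  haveI hImax : (Ideal.span {α} : Ideal (𝓞 K)).IsMaximal := Ideal.IsPrime.isMaximal hIprime hIbot
  letI : Field (𝓞 K ⧸ Ideal.span {α}) := Ideal.Quotient.field _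
  have hcard : Nat.card (𝓞 K ⧸ Ideal.span {α}) = p := by
    rw [← habs, Ideal.absNorm_apply, Submodule.cardQuot_apply]
  haveI : Finite (𝓞 K ⧸ Ideal.span {α}) :=
    Nat.finite_of_card_ne_zero (by rw [hcard]; exact hp.pos.ne')
  letI : Fintype (𝓞 K ⧸ Ideal.span {α}) := Fintype.ofFinite _
  have hcard' : Fintype.card (𝓞 K ⧸ Ideal.span {α}) = p := by
    rw [← Nat.card_eq_fintype_card, hcard]
  haveI : CharP (𝓞 K ⧸ Ideal.span {α}) p := charP_of_card_eq_prime hcard'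
  let f : ZMod p →+* 𝓞 K ⧸ Ideal.span {α} := ZMod.castHom (dvd_refl p) _
  have hfbij : Function.Bijective f :=
    (Fintype.bijective_iff_injective_and_card f).mpr ⟨f.injective, by rw [ZMod.card, hcard']⟩
  -- restrict σ to the ring of integers
  let σ₀ : 𝓞 K ≃ₐ[ℤ] 𝓞 K := galRestrict ℤ ℚ K (𝓞 K) σ
  have hσ₀ : ∀ x : 𝓞 K, ((σ₀ x : 𝓞 K) : K) = σ (x : K) := fun x =>
    algebraMap_galRestrict_apply ℤ σ x
  have hσβ : σ₀ α = β := by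
    apply RingOfIntegers.ext
    rw [hσ₀, hβ]
  have hle : Ideal.span {α} ≤ Ideal.comap (σ₀ : 𝓞 K →+* 𝓞 K) (Ideal.span {α}) := by
    rw [Ideal.span_le, Set.singleton_subset_iff]
    refine Ideal.mem_comap.mpr ?_
    show (σ₀ α) ∈ Ideal.span {α}
    rw [hσβ, h]
    exact Ideal.subset_span rfl
  let τ : (𝓞 K ⧸ Ideal.span {α}) →+* (𝓞 K ⧸ Ideal.span {α}) :=
    Ideal.quotientMap (Ideal.span {α}) (σ₀ : 𝓞 K →+* 𝓞 K) hle
  have hτ : ∀ z : 𝓞 K ⧸ Ideal.span {α}, τ z = z := by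
    intro z
    obtain ⟨y, rfl⟩ := hfbij.2 z
    have heq : τ.comp f = f := Subsingleton.elim _ _
    calc τ (f y) = (τ.comp f) y := rfl
    _ = f y := by rw [heq]
  -- primitive root as integer
  have hζint : IsIntegral ℤ ζ := hζ.isIntegral (by omega)
  set ζ' : 𝓞 K := ⟨ζ, hζint⟩ with hζ'def
  have hζ'prim : IsPrimitiveRoot ζ' (p - 1) :=
    IsPrimitiveRoot.of_map_of_injective (by exact hζ) RingOfIntegers.coe_injective
  have hpow1 : ζ' ^ (p - 1) = 1 := hζ'prim.pow_eq_one
  have hζK : (ζ' : K) = ζ := rfl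
  have hσζ : σ₀ ζ' = ζ' ^ (p - 2) := by
    apply RingOfIntegers.ext
    rw [hσ₀, hζK, hσ]
    have hcoe : ((ζ' ^ (p - 2) : 𝓞 K) : K) = ζ ^ (p - 2) := by push_cast [hζK]; rfl
    rw [hcoe]
    have hz1 : ζ ^ (p - 1) = 1 := hζ.pow_eq_one
    have hmul : ζ * ζ ^ (p - 2) = 1 := by
      rw [mul_comm, ← pow_succ, show p - 2 + 1 = p - 1 by omega, hz1]
    exact inv_eq_of_mul_eq_one_right hmul
  have hmem : σ₀ ζ' - ζ' ∈ Ideal.span {α} := by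
    have h1 := hτ (Ideal.Quotient.mk (Ideal.span {α}) ζ')
    have h3 := Ideal.quotientMap_mk (H := hle) (x := ζ')
    have h2 := h3.symm.trans h1
    rw [Ideal.Quotient.mk_eq_mk_iff_sub_mem] at h2
    exact h2
  have hdvd1 : α ∣ ζ' ^ (p - 2) - ζ' := by
    rw [← hσζ, ← Ideal.mem_span_singleton]
    exact hmem
  set m : ℕ := p - 3 with hm
  have hkey : ζ' ^ m - 1 = ζ' ^ (m + 1) * (ζ' ^ (m + 1) - ζ') := by
    have h1 : ζ' ^ (m + 2) = 1 := by
      rw [show m + 2 = p - 1 by omega]; exact hpow1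
    linear_combination (1 - ζ' ^ m) * h1
  have hdvd2 : α ∣ ζ' ^ m - 1 := by
    rw [hkey]
    exact Dvd.dvd.mul_left (by rw [show m + 1 = p - 2 by omega]; exact hdvd1) _
  have hprod : ∏ k ∈ Finset.range (p - 2), (1 - ζ' ^ (k + 1)) = ((p - 2 : ℕ) : 𝓞 K) + 1 := by
    have := IsPrimitiveRoot.prod_one_sub_pow_eq_order (n := p - 2) (μ := ζ')
      (by rw [show p - 2 + 1 = p - 1 by omega]; exact hζ'prim)
    exact_mod_cast this
  have hdvd3 : α ∣ ((p - 1 : ℕ) : 𝓞 K) := by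
    have hmem2 : (1 - ζ' ^ m) ∣ ∏ k ∈ Finset.range (p - 2), (1 - ζ' ^ (k + 1)) := by
      rw [show m = (m - 1) + 1 by omega]
      exact Finset.dvd_prod_of_mem _ (Finset.mem_range.mpr (by omega))
    rw [hprod] at hmem2
    calc α ∣ 1 - ζ' ^ m := by rw [← neg_sub]; exact dvd_neg.mpr hdvd2
    _ ∣ ((p - 2 : ℕ) : 𝓞 K) + 1 := hmem2
    _ = ((p - 1 : ℕ) : 𝓞 K) := by push_cast [show p - 1 = (p - 2) + 1 by omega]; ring
  have hnormdvd : Algebra.norm ℤ α ∣ Algebra.norm ℤ (((p - 1 : ℕ) : 𝓞 K)) :=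
    map_dvd (Algebra.norm ℤ) hdvd3
  have hd : Algebra.norm ℤ (((p - 1 : ℕ) : 𝓞 K)) =
      ((p - 1 : ℕ) : ℤ) ^ (Fintype.card (Module.Free.ChooseBasisIndex ℤ (𝓞 K))) := by
    rw [show (((p - 1 : ℕ) : 𝓞 K)) = algebraMap ℤ (𝓞 K) ((p - 1 : ℕ) : ℤ) by push_cast; rfl]
    exact Algebra.norm_algebraMap_of_basis (NumberField.RingOfIntegers.basis K) _
  set d := Fintype.card (Module.Free.ChooseBasisIndex ℤ (𝓞 K)) with hdd
  rw [hd] at hnormdvd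
  have hpdvd : (p : ℤ) ∣ ((p - 1 : ℕ) : ℤ) ^ d := by
    have h3 := Int.natAbs_dvd.mpr hnormdvd
    rwa [hNα] at h3
  have h5' : p ∣ (p - 1) ^ d := by exact_mod_cast hpdvd
  have h5 : p ∣ p - 1 := hp.dvd_of_dvd_pow h5'
  have hle' : p ≤ p - 1 := Nat.le_of_dvd (by omega) h5
  omega


/-- Let `p ≥ 5` be prime, `ζ` a primitive `(p-1)`-th root of unity in the `(p-1)`-th
cyclotomic field, and `α` an element of the ring of integers `ℤ[ζ_{p-1}]` of field norm
`±p`.  If `σ` is the `ℚ`-automorphism of `ℚ(ζ_{p-1})` with `σ(ζ) = ζ⁻¹` (complex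
conjugation) and `β` is the image of `α` under `σ` (as an element of the ring of
integers), then the principal ideals `(α)` and `(β) = (σ(α))` are distinct. -/
theorem span_ne_span_conj
    (p : ℕ) (hp : p.Prime) (hp5 : 5 ≤ p)
    (ζ : CyclotomicField (p - 1) ℚ)
    (hζ : IsPrimitiveRoot ζ (p - 1))
    (α : 𝓞 (CyclotomicField (p - 1) ℚ))
    (hα : Algebra.norm ℚ (α : CyclotomicField (p - 1) ℚ) = (p : ℚ) ∨
      Algebra.norm ℚ (α : CyclotomicField (p - 1) ℚ) = -(p : ℚ))
    (σ : CyclotomicField (p - 1) ℚ ≃ₐ[ℚ]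
      CyclotomicField (p - 1) ℚ)
    (hσ : σ ζ = ζ⁻¹)
    (β : 𝓞 (CyclotomicField (p - 1) ℚ))
    (hβ : (β : CyclotomicField (p - 1) ℚ) =
      σ (α : CyclotomicField (p - 1) ℚ)) :
    Ideal.span {α} ≠ Ideal.span {β} := by
  haveI : NumberField (CyclotomicField (p - 1) ℚ) :=
    haveI : NeZero (p - 1) := ⟨by omega⟩
    haveI : NeZero ((p - 1 : ℕ) : ℚ) := ⟨by exact_mod_cast (show p - 1 ≠ 0 by omega)⟩
    haveI : IsCyclotomicExtension {p - 1} ℚ (CyclotomicField (p - 1) ℚ) :=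
      CyclotomicField.isCyclotomicExtension (p - 1) ℚ
    IsCyclotomicExtension.numberField {p - 1} ℚ _
  exact span_ne_span_conj_aux p hp hp5 ζ hζ α hα σ hσ β hβ
end

section
/- Let C ≈ 0.57721 denote the Euler–Mascheroni constant and define, for real x, f(x) = (log(x)/(x−1))·(e^C·log(log(x−1)) + 5/(2·log(log(x−1)))). Then f is strictly decreasing on the interval (43, ∞). -/
open Real

set_option maxHeartbeats 1000000

/-- The function
`f(x) = (log x / (x - 1)) · (e^γ · log (log (x - 1)) + 5 / (2 · log (log (x - 1))))`,
where `γ` is the Euler–Mascheroni constant, is strictly decreasing on `(43, ∞)`. -/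
theorem f_strictAntiOn_Ioi_43 :
    StrictAntiOn (fun x : ℝ =>
      (Real.log x / (x - 1)) *
        (Real.exp Real.eulerMascheroniConstant * Real.log (Real.log (x - 1)) +
          5 / (2 * Real.log (Real.log (x - 1)))))
      (Set.Ioi (43 : ℝ)) := by
  have main : ∀ x ∈ Set.Ioi (43 : ℝ), ∃ d : ℝ, d < 0 ∧
      HasDerivAt (fun x : ℝ =>
        (Real.log x / (x - 1)) *
          (Real.exp Real.eulerMascheroniConstant * Real.log (Real.log (x - 1)) +
            5 / (2 * Real.log (Real.log (x - 1))))) d x := by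
    intro x hx
    rw [Set.mem_Ioi] at hx
    have hx0 : (0:ℝ) < x := by linarith
    have hv : (0:ℝ) < x - 1 := by linarith
    have hl1 : (0:ℝ) < Real.log (x-1) := Real.log_pos (by linarith)
    have hl1' : 5 * Real.log 2 < Real.log (x-1) := by
      have h32 : Real.log 32 < Real.log (x-1) := Real.log_lt_log (by norm_num) (by linarith)
      have : Real.log 32 = 5 * Real.log 2 := by
        rw [show (32:ℝ) = 2^5 by norm_num, Real.log_pow]; push_cast; ring
      linarith
    have hl1gt : (2:ℝ) < Real.log (x-1) := by nlinarith [Real.log_two_gt_d9]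
    have hL' : Real.log 2 < Real.log (Real.log (x-1)) :=
      Real.log_lt_log two_pos hl1gt
    have hL : (0:ℝ) < Real.log (Real.log (x-1)) := by nlinarith [Real.log_two_gt_d9]
    have hlx : Real.log (x-1) < Real.log x := Real.log_lt_log hv (by linarith)
    have h1 : HasDerivAt (fun y : ℝ => Real.log y) (1/x) x := by
      simpa using Real.hasDerivAt_log hx0.ne'
    have h2 : HasDerivAt (fun y : ℝ => y - 1) 1 x := (hasDerivAt_id x).sub_const 1
    have h3 : HasDerivAt (fun y : ℝ => Real.log (y - 1)) (1/(x-1)) x := by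
      simpa [Function.comp_def] using (Real.hasDerivAt_log hv.ne').comp x h2
    have h4 : HasDerivAt (fun y : ℝ => Real.log (Real.log (y - 1)))
        (1/(Real.log (x-1)) * (1/(x-1))) x := by
      simpa [Function.comp_def] using (Real.hasDerivAt_log hl1.ne').comp x h3
    have hg : HasDerivAt (fun y : ℝ => Real.log y / (y - 1))
        ((1/x * (x-1) - Real.log x * 1)/(x-1)^2) x := h1.div h2 hv.ne'
    set A := Real.exp Real.eulerMascheroniConstant with hA
    have hA0 : 0 < A := Real.exp_pos _
    have h5 : HasDerivAt (fun y : ℝ => A * Real.log (Real.log (y - 1)))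
        (A * (1/(Real.log (x-1)) * (1/(x-1)))) x := h4.const_mul A
    have h6 : HasDerivAt (fun y : ℝ => 2 * Real.log (Real.log (y - 1)))
        (2 * (1/(Real.log (x-1)) * (1/(x-1)))) x := h4.const_mul 2
    have h7 : HasDerivAt (fun y : ℝ => 5 / (2 * Real.log (Real.log (y - 1))))
        ((0 * (2 * Real.log (Real.log (x-1))) - 5 * (2 * (1/(Real.log (x-1)) * (1/(x-1)))))
          / (2 * Real.log (Real.log (x-1)))^2) x :=
      (hasDerivAt_const x 5).div h6 (by positivity)
    refine ⟨_, ?_, hg.mul (h5.add h7)⟩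
    -- now prove the derivative value is negative
    set lx := Real.log x with hlxdef
    set l1 := Real.log (x-1) with hl1def
    set L := Real.log (Real.log (x-1)) with hLdef
    have hlx1 : 1 < lx := by nlinarith [Real.log_two_gt_d9]
    -- step 1 : first summand bound
    have e2 : (1/x * (x-1) - lx * 1)/(x-1)^2 ≤ (1 - lx)/(x-1)^2 := by
      gcongr
      · have h1x : 1/x * (x-1) < 1 := by
          rw [one_div, inv_mul_eq_div]
          exact (div_lt_one hx0).mpr (by linarith)
        linarith
      · linarith
    have e3 : (1 - lx)/(x-1)^2 < 0 :=
      div_neg_of_neg_of_pos (by linarith) (by positivity)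
    have hALpos : 0 < A * L := mul_pos hA0 hL
    have hhpos : 0 < A * L + 5 / (2 * L) := by positivity
    have e4 : A * L ≤ A * L + 5 / (2 * L) := by
      have : 0 < 5 / (2 * L) := by positivity
      linarith
    have step1 : (1/x * (x-1) - lx * 1)/(x-1)^2 * (A * L + 5 / (2 * L)) ≤
        (1 - lx)/(x-1)^2 * (A * L) :=
      calc (1/x * (x-1) - lx * 1)/(x-1)^2 * (A * L + 5 / (2 * L))
          ≤ (1 - lx)/(x-1)^2 * (A * L + 5 / (2 * L)) :=
            mul_le_mul_of_nonneg_right e2 hhpos.le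
        _ ≤ (1 - lx)/(x-1)^2 * (A * L) := mul_le_mul_of_nonpos_left e4 e3.le
    -- step 2 : second summand bound
    have e5 : (0 * (2 * L) - 5 * (2 * (1/l1 * (1/(x-1)))))/(2 * L)^2 ≤ 0 := by
      apply div_nonpos_of_nonpos_of_nonneg _ (by positivity)
      have : 0 < 5 * (2 * (1/l1 * (1/(x-1)))) := by positivity
      linarith
    have step2 : lx/(x-1) * (A * (1/l1 * (1/(x-1))) +
        (0 * (2 * L) - 5 * (2 * (1/l1 * (1/(x-1)))))/(2 * L)^2) ≤
        lx/(x-1) * (A * (1/l1 * (1/(x-1)))) := by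
      apply mul_le_mul_of_nonneg_left _ (by positivity)
      linarith
    -- key inequality
    have hc := Real.log_two_gt_d9
    have hLl1 : (12:ℝ)/5 < L * l1 := by nlinarith
    have key : lx < (lx - 1) * L * l1 := by nlinarith [mul_lt_mul_of_pos_left hLl1 (show (0:ℝ) < lx - 1 by linarith)]
    have h9 : lx/l1 < (lx - 1) * L := (div_lt_iff₀ hl1).mpr (by nlinarith)
    have final : (1 - lx)/(x-1)^2 * (A * L) + lx/(x-1) * (A * (1/l1 * (1/(x-1)))) < 0 := by
      have heq : (1 - lx)/(x-1)^2 * (A * L) + lx/(x-1) * (A * (1/l1 * (1/(x-1)))) =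
          A/(x-1)^2 * ((1 - lx) * L + lx/l1) := by
        field_simp
      rw [heq]
      apply mul_neg_of_pos_of_neg (by positivity)
      linarith
    linarith [step1, step2, final]
  apply strictAntiOn_of_deriv_neg (convex_Ioi (43:ℝ))
  · intro x hx
    obtain ⟨d, _, hd⟩ := main x hx
    exact hd.continuousAt.continuousWithinAt
  · intro x hx
    rw [interior_Ioi] at hx
    obtain ⟨d, hdneg, hd⟩ := main x hx
    rw [hd.deriv]
    exact hdneg
end

section
/- Let C ≈ 0.57721 denote the Euler–Mascheroni constant and define, for real x, f(x) = (log(x)/(x−1))·(e^C·log(log(x−1)) + 5/(2·log(log(x−1)))). Then for every real number x ≥ 173 one has f(x) < log(5)/12. -/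
open Real

lemma exp_upper8 (x : ℝ) (h0 : 0 ≤ x) (h1 : x ≤ 1) :
    exp x ≤ (1 + x + x^2/2 + x^3/6 + x^4/24 + x^5/120 + x^6/720 + x^7/5040) + x^8 * 9 / (40320*8) := by
  have h := Real.exp_bound' h0 h1 (n := 8) (by norm_num)
  refine h.trans_eq ?_
  simp [Finset.sum_range_succ, Nat.factorial]
  ring_nf
  simp

lemma exp_lower8 (x : ℝ) (h0 : 0 ≤ x) :
    1 + x + x^2/2 + x^3/6 + x^4/24 + x^5/120 + x^6/720 + x^7/5040 ≤ exp x := by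
  refine le_trans (le_of_eq ?_) (Real.sum_le_exp_of_nonneg h0 8)
  simp [Finset.sum_range_succ, Nat.factorial]

lemma exp_comp (n : ℕ) (r : ℝ) (h0 : 0 ≤ r) : exp (n * 1 + r) = exp 1 ^ n * exp r := by
  rw [Real.exp_add, Real.exp_nat_mul]

lemma exp5147_lt : exp 5.147 < 172 := by
  have h : (5.147:ℝ) = (5:ℕ) * 1 + 0.147 := by norm_num
  rw [h, exp_comp _ _ (by norm_num)]
  have h1 : exp 1 ≤ 2.7182818286 := Real.exp_one_lt_d9.le
  have h2 := exp_upper8 0.147 (by norm_num) (by norm_num)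
  calc exp 1 ^ 5 * exp 0.147 ≤ 2.7182818286^5 * ((1 + 0.147 + 0.147^2/2 + 0.147^3/6 + 0.147^4/24 + 0.147^5/120 + 0.147^6/720 + 0.147^7/5040) + 0.147^8 * 9 / (40320*8)) := by
        gcongr <;> positivity
    _ < 172 := by norm_num

lemma exp51478_gt : 172 < exp 5.1478 := by
  have h : (5.1478:ℝ) = (5:ℕ) * 1 + 0.1478 := by norm_num
  rw [h, exp_comp _ _ (by norm_num)]
  have h1 : (2.7182818283:ℝ) ≤ exp 1 := Real.exp_one_gt_d9.le
  have h2 := exp_lower8 0.1478 (by norm_num)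
  calc (172:ℝ) < 2.7182818283^5 * (1 + 0.1478 + 0.1478^2/2 + 0.1478^3/6 + 0.1478^4/24 + 0.1478^5/120 + 0.1478^6/720 + 0.1478^7/5040) := by norm_num
    _ ≤ exp 1 ^ 5 * exp 0.1478 := by gcongr <;> positivity

lemma exp16383_lt : exp 1.6383 < 5.147 := by
  have h : (1.6383:ℝ) = (1:ℕ) * 1 + 0.6383 := by norm_num
  rw [h, exp_comp _ _ (by norm_num)]
  have h1 : exp 1 ≤ 2.7182818286 := Real.exp_one_lt_d9.le
  have h2 := exp_upper8 0.6383 (by norm_num) (by norm_num)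
  calc exp 1 ^ 1 * exp 0.6383 ≤ 2.7182818286^1 * ((1 + 0.6383 + 0.6383^2/2 + 0.6383^3/6 + 0.6383^4/24 + 0.6383^5/120 + 0.6383^6/720 + 0.6383^7/5040) + 0.6383^8 * 9 / (40320*8)) := by
        gcongr <;> positivity
    _ < 5.147 := by norm_num

lemma exp1639_gt : 5.1478 < exp 1.639 := by
  have h : (1.639:ℝ) = (1:ℕ) * 1 + 0.639 := by norm_num
  rw [h, exp_comp _ _ (by norm_num)]
  have h1 : (2.7182818283:ℝ) ≤ exp 1 := Real.exp_one_gt_d9.le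
  have h2 := exp_lower8 0.639 (by norm_num)
  calc (5.1478:ℝ) < 2.7182818283^1 * (1 + 0.639 + 0.639^2/2 + 0.639^3/6 + 0.639^4/24 + 0.639^5/120 + 0.639^6/720 + 0.639^7/5040) := by norm_num
    _ ≤ exp 1 ^ 1 * exp 0.639 := by gcongr <;> positivity

lemma exp16093_lt : exp 1.6093 < 5 := by
  have h : (1.6093:ℝ) = (1:ℕ) * 1 + 0.6093 := by norm_num
  rw [h, exp_comp _ _ (by norm_num)]
  have h1 : exp 1 ≤ 2.7182818286 := Real.exp_one_lt_d9.le
  have h2 := exp_upper8 0.6093 (by norm_num) (by norm_num)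
  calc exp 1 ^ 1 * exp 0.6093 ≤ 2.7182818286^1 * ((1 + 0.6093 + 0.6093^2/2 + 0.6093^3/6 + 0.6093^4/24 + 0.6093^5/120 + 0.6093^6/720 + 0.6093^7/5040) + 0.6093^8 * 9 / (40320*8)) := by
        gcongr <;> positivity
    _ < 5 := by norm_num

lemma exp46047_lt : exp 4.6047 < 100 := by
  have h : (4.6047:ℝ) = (4:ℕ) * 1 + 0.6047 := by norm_num
  rw [h, exp_comp _ _ (by norm_num)]
  have h1 : exp 1 ≤ 2.7182818286 := Real.exp_one_lt_d9.le
  have h2 := exp_upper8 0.6047 (by norm_num) (by norm_num)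
  calc exp 1 ^ 4 * exp 0.6047 ≤ 2.7182818286^4 * ((1 + 0.6047 + 0.6047^2/2 + 0.6047^3/6 + 0.6047^4/24 + 0.6047^5/120 + 0.6047^6/720 + 0.6047^7/5040) + 0.6047^8 * 9 / (40320*8)) := by
        gcongr <;> positivity
    _ < 100 := by norm_num

lemma gamma_lt : Real.eulerMascheroniConstant < 0.58268 := by
  have h := Real.eulerMascheroniConstant_lt_eulerMascheroniSeq' 100
  have h100 : Real.eulerMascheroniSeq' 100 = (harmonic 100 : ℝ) - Real.log 100 := by
    rw [Real.eulerMascheroniSeq']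
    norm_num
  have hlog : (4.6047:ℝ) < Real.log 100 := by
    rw [Real.lt_log_iff_exp_lt (by norm_num)]
    exact exp46047_lt
  have hharm : ((harmonic 100 : ℚ) : ℝ) < 518738/100000 := by
    have h' : (harmonic 100 : ℚ) < 518738/100000 := by norm_num [harmonic, Finset.sum_range_succ]
    have := (Rat.cast_lt (K := ℝ)).mpr h'
    push_cast at this
    convert this using 2 <;> norm_num
  rw [h100] at h
  linarith

lemma expgamma_lt : exp Real.eulerMascheroniConstant < 1.791 := by
  have h1 : exp Real.eulerMascheroniConstant < exp 0.58268 := Real.exp_lt_exp.mpr gamma_lt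
  have h2 := exp_upper8 0.58268 (by norm_num) (by norm_num)
  calc exp Real.eulerMascheroniConstant < exp 0.58268 := h1
    _ ≤ _ := h2
    _ < 1.791 := by norm_num

lemma hasDerivAt_g (a t : ℝ) (ht : 5 ≤ t) :
    HasDerivAt (fun t : ℝ => t * exp (-t) * (a * log t + 5/2 / log t))
      (exp (-t) * ((1 - t) * (a * log t + 5/2 / log t) + a - (5/2) / (log t)^2)) t := by
  have ht0 : (0:ℝ) < t := by linarith
  have hlog1 : (1:ℝ) ≤ log t := by
    rw [Real.le_log_iff_exp_le ht0]
    calc exp 1 ≤ 2.7182818286 := Real.exp_one_lt_d9.le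
      _ ≤ t := by linarith
  have hlogne : log t ≠ 0 := by positivity
  have h1 : HasDerivAt (fun t : ℝ => t * exp (-t)) (1 * exp (-t) + t * (exp (-t) * (-1))) t :=
    (hasDerivAt_id t).mul (((Real.hasDerivAt_exp (-t)).comp t ((hasDerivAt_id t).neg)))
  have h2 : HasDerivAt (fun t : ℝ => a * log t + 5/2 / log t)
      (a * t⁻¹ + (0 * log t - 5/2 * t⁻¹) / (log t)^2) t :=
    ((Real.hasDerivAt_log ht0.ne').const_mul a).add
      ((hasDerivAt_const t (5/2 : ℝ)).div (Real.hasDerivAt_log ht0.ne') hlogne)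
  have h3 := h1.mul h2
  refine h3.congr_deriv ?_
  field_simp
  ring

lemma g_anti (a : ℝ) (ha : 0 < a) (ha2 : a ≤ 2) :
    AntitoneOn (fun t : ℝ => t * exp (-t) * (a * log t + 5/2 / log t)) (Set.Ici 5) := by
  have hderiv : ∀ t ∈ interior (Set.Ici (5:ℝ)),
      deriv (fun t : ℝ => t * exp (-t) * (a * log t + 5/2 / log t)) t ≤ 0 := by
    intro t ht
    rw [interior_Ici, Set.mem_Ioi] at ht
    rw [(hasDerivAt_g a t ht.le).deriv]
    have ht0 : (0:ℝ) < t := by linarith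
    have hE : (0:ℝ) < exp (-t) := Real.exp_pos _
    set L := log t with hLdef
    have hL1 : (1:ℝ) ≤ L := by
      rw [hLdef, Real.le_log_iff_exp_le ht0]
      calc exp 1 ≤ 2.7182818286 := Real.exp_one_lt_d9.le
        _ ≤ t := by linarith
    have hL0 : (0:ℝ) < L := by linarith
    have key : (1 - t) * (a * L + 5/2 / L) + a - (5/2) / L^2 ≤ 0 := by
      have hpos : 0 < a * L + 5/2 / L := by positivity
      have h4 : (1 - t) * (a * L + 5/2 / L) ≤ -4 * (a * L + 5/2 / L) := by
        apply mul_le_mul_of_nonneg_right _ hpos.le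
        linarith
      have h5 : a * L ≤ a * L + 5/2 / L := by
        have : (0:ℝ) ≤ 5/2 / L := by positivity
        linarith
      have h6 : a ≤ a * L := by nlinarith
      have h7 : (0:ℝ) ≤ (5/2) / L^2 := by positivity
      nlinarith
    have := mul_nonpos_of_nonneg_of_nonpos hE.le key
    linarith [this]
  have hlogCont : ContinuousOn log (Set.Ici (5:ℝ)) := by
    apply Real.continuousOn_log.mono
    intro t ht
    simp only [Set.mem_Ici] at ht
    simp only [Set.mem_compl_iff, Set.mem_singleton_iff]
    intro h; rw [h] at ht; norm_num at ht
  have hlogne : ∀ t ∈ Set.Ici (5:ℝ), log t ≠ 0 := by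
    intro t ht
    simp only [Set.mem_Ici] at ht
    have ht0 : (0:ℝ) < t := by linarith
    have : (1:ℝ) ≤ log t := by
      rw [Real.le_log_iff_exp_le ht0]
      calc exp 1 ≤ 2.7182818286 := Real.exp_one_lt_d9.le
        _ ≤ t := by linarith
    positivity
  apply antitoneOn_of_deriv_nonpos (convex_Ici 5)
  · exact ((continuous_id.mul (Real.continuous_exp.comp continuous_neg)).continuousOn).mul
      ((continuousOn_const.mul hlogCont).add (continuousOn_const.div hlogCont hlogne))
  · intro t ht
    rw [interior_Ici, Set.mem_Ioi] at ht
    exact (hasDerivAt_g a t ht.le).differentiableAt.differentiableWithinAt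
  · exact hderiv


set_option maxHeartbeats 1000000 in
/-- For every real `x ≥ 173`, the function
`f(x) = (log x / (x - 1)) · (e^γ · log (log (x - 1)) + 5 / (2 · log (log (x - 1))))`,
where `γ` is the Euler–Mascheroni constant, satisfies `f(x) < log 5 / 12`. -/
theorem f_lt_of_173_le (x : ℝ) (hx : 173 ≤ x) :
    (Real.log x / (x - 1)) *
        (Real.exp Real.eulerMascheroniConstant * Real.log (Real.log (x - 1)) +
          5 / (2 * Real.log (Real.log (x - 1)))) < Real.log 5 / 12 := by
  have hx1 : (172:ℝ) ≤ x - 1 := by linarith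
  have hx0 : (0:ℝ) < x - 1 := by linarith
  set a : ℝ := Real.exp Real.eulerMascheroniConstant with hadef
  have ha : 0 < a := Real.exp_pos _
  have haub : a < 1.791 := expgamma_lt
  set t : ℝ := Real.log (x - 1) with htdef
  set t0 : ℝ := Real.log 172 with ht0def
  have ht0lb : (5.147:ℝ) < t0 := by
    rw [ht0def, Real.lt_log_iff_exp_lt (by norm_num)]; exact exp5147_lt
  have ht0ub : t0 < 5.1478 := by
    rw [ht0def, Real.log_lt_iff_lt_exp (by norm_num)]; exact exp51478_gt
  have htt0 : t0 ≤ t := Real.log_le_log (by norm_num) hx1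
  have ht5 : (5:ℝ) ≤ t := by linarith
  have ht05 : (5:ℝ) ≤ t0 := by linarith
  -- rewrite 5 / (2 * L) as 5/2 / L
  have hdivrw : (5:ℝ) / (2 * Real.log t) = 5/2 / Real.log t := div_mul_eq_div_div 5 2 (Real.log t)
  rw [hdivrw]
  -- basic facts about L = log t
  have hLlb : (1.6093:ℝ) < Real.log t := by
    have h5 : Real.log 5 ≤ Real.log t := Real.log_le_log (by norm_num) ht5
    have : (1.6093:ℝ) < Real.log 5 := by
      rw [Real.lt_log_iff_exp_lt (by norm_num)]; exact exp16093_lt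
    linarith
  have hL0 : (0:ℝ) < Real.log t := by linarith
  have hinner : 0 < a * Real.log t + 5/2 / Real.log t := by positivity
  -- Step A : log x / (x-1) ≤ (801/800) * (t * exp (-t))
  have hexp : Real.exp (-t) = (x-1)⁻¹ := by rw [Real.exp_neg, Real.exp_log hx0]
  have hxpos : (0:ℝ) < x := by linarith
  have hlogx : Real.log x ≤ t + 1/(x-1) := by
    have hq : Real.log (x/(x-1)) = Real.log x - Real.log (x-1) :=
      Real.log_div hxpos.ne' hx0.ne'
    have h2 : Real.log (x/(x-1)) ≤ x/(x-1) - 1 :=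
      Real.log_le_sub_one_of_pos (by positivity)
    have he : x/(x-1) - 1 = 1/(x-1) := by field_simp; ring
    rw [he] at h2
    rw [hq] at h2
    linarith
  have h800 : 1/(x-1) ≤ t/800 := by
    rw [div_le_div_iff₀ hx0 (by norm_num)]
    have := mul_le_mul ht5 hx1 (by norm_num) (by linarith)
    nlinarith
  have hstepA : Real.log x / (x - 1) ≤ (801/800) * (t * Real.exp (-t)) := by
    rw [div_eq_mul_inv, ← hexp]
    have h1 : Real.log x ≤ (801/800) * t := by linarith
    calc Real.log x * Real.exp (-t) ≤ ((801/800) * t) * Real.exp (-t) :=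
          mul_le_mul_of_nonneg_right h1 (Real.exp_pos _).le
      _ = (801/800) * (t * Real.exp (-t)) := by ring
  -- Step B+C : apply antitonicity
  have hanti := g_anti a ha (by linarith)
  have hg : t * Real.exp (-t) * (a * Real.log t + 5/2 / Real.log t)
      ≤ t0 * Real.exp (-t0) * (a * Real.log t0 + 5/2 / Real.log t0) :=
    hanti (Set.mem_Ici.mpr ht05) (Set.mem_Ici.mpr ht5) htt0
  have hstepB : Real.log x / (x - 1) * (a * Real.log t + 5/2 / Real.log t)
      ≤ (801/800) * (t0 * Real.exp (-t0) * (a * Real.log t0 + 5/2 / Real.log t0)) := by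
    calc Real.log x / (x - 1) * (a * Real.log t + 5/2 / Real.log t)
        ≤ (801/800) * (t * Real.exp (-t)) * (a * Real.log t + 5/2 / Real.log t) :=
          mul_le_mul_of_nonneg_right hstepA hinner.le
      _ = (801/800) * (t * Real.exp (-t) * (a * Real.log t + 5/2 / Real.log t)) := by ring
      _ ≤ (801/800) * (t0 * Real.exp (-t0) * (a * Real.log t0 + 5/2 / Real.log t0)) := by
          linarith
  -- Step D : numerical bound at t0
  have hexp0 : Real.exp (-t0) = (172:ℝ)⁻¹ := by
    rw [ht0def, Real.exp_neg, Real.exp_log (by norm_num : (0:ℝ) < 172)]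
  have hL0lb : (1.6383:ℝ) < Real.log t0 := by
    have h1 : Real.log 5.147 < Real.log t0 := Real.log_lt_log (by norm_num) ht0lb
    have h2 : (1.6383:ℝ) < Real.log 5.147 := by
      rw [Real.lt_log_iff_exp_lt (by norm_num)]; exact exp16383_lt
    linarith
  have hL0ub : Real.log t0 < 1.639 := by
    have h1 : Real.log t0 < Real.log 5.1478 := Real.log_lt_log (by linarith) ht0ub
    have h2 : Real.log 5.1478 < 1.639 := by
      rw [Real.log_lt_iff_lt_exp (by norm_num)]; exact exp1639_gt
    linarith
  have hL0pos : (0:ℝ) < Real.log t0 := by linarith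
  have hstepD : (801/800) * (t0 * Real.exp (-t0) * (a * Real.log t0 + 5/2 / Real.log t0))
      < Real.log 5 / 12 := by
    rw [hexp0]
    have hbound : t0 * (172:ℝ)⁻¹ * (a * Real.log t0 + 5/2 / Real.log t0)
        ≤ 5.1478 * (172:ℝ)⁻¹ * (1.791 * 1.639 + 5/2 / 1.6383) := by
      have hin : a * Real.log t0 + 5/2 / Real.log t0 ≤ 1.791 * 1.639 + 5/2 / 1.6383 := by
        have h1 : a * Real.log t0 ≤ 1.791 * 1.639 :=
          mul_le_mul haub.le hL0ub.le hL0pos.le (by norm_num)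
        have h2 : (5:ℝ)/2 / Real.log t0 ≤ 5/2 / 1.6383 := by gcongr <;> norm_num
        linarith
      have ht0pos : (0:ℝ) < t0 := by linarith
      calc t0 * (172:ℝ)⁻¹ * (a * Real.log t0 + 5/2 / Real.log t0)
          ≤ t0 * (172:ℝ)⁻¹ * (1.791 * 1.639 + 5/2 / 1.6383) := by
            apply mul_le_mul_of_nonneg_left hin; positivity
        _ ≤ 5.1478 * (172:ℝ)⁻¹ * (1.791 * 1.639 + 5/2 / 1.6383) := by
            apply mul_le_mul_of_nonneg_right _ (by norm_num)
            apply mul_le_mul_of_nonneg_right (by linarith) (by norm_num)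
      
    have hfinal : (801/800 : ℝ) * (5.1478 * (172:ℝ)⁻¹ * (1.791 * 1.639 + 5/2 / 1.6383))
        < 1.6093 / 12 := by norm_num
    have hlog5 : (1.6093:ℝ) < Real.log 5 := by
      rw [Real.lt_log_iff_exp_lt (by norm_num)]; exact exp16093_lt
    have hmul : (801/800:ℝ) * (t0 * (172:ℝ)⁻¹ * (a * Real.log t0 + 5/2 / Real.log t0))
        ≤ (801/800:ℝ) * (5.1478 * (172:ℝ)⁻¹ * (1.791 * 1.639 + 5/2 / 1.6383)) := by
      linarith
    linarith
  calc Real.log x / (x - 1) * (a * Real.log t + 5/2 / Real.log t)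
      ≤ (801/800) * (t0 * Real.exp (-t0) * (a * Real.log t0 + 5/2 / Real.log t0)) := hstepB
    _ < Real.log 5 / 12 := hstepD
end
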